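/- Let w(z) = -log|z| on ℝ²\{0}, and let z₀ ∈ ℝ², L > 0. Define G(z) = a w(z - z₀) + (2/π) ∫_{B(z₀,L)} log|z - y| dy with a = 2L². Then for |z - z₀| = r ≤ L, G(z) = 2L² log L - 2L² log r + r² - L², and in particular G is radially symmetric around z₀ on B(z₀,L) and vanishes on the boundary |z - z₀| = L. -/

import Mathlib

open MeasureTheory Real Set intervalIntegral

lemma slit_aux {c z : ℂ} (hc : ‖c‖ < 1) (hz : ‖z‖ ≤ 1) : 1 - c * z ∈ Complex.slitPlane := by
  refine Complex.mem_slitPlane_iff.2 (Or.inl ?_)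
  have h1 : (1 - c * z).re = 1 - (c * z).re := by simp
  have h2 : (c * z).re ≤ ‖c * z‖ := Complex.re_le_norm _
  have h3 : ‖c * z‖ < 1 := by
    rw [norm_mul]
    nlinarith [norm_nonneg c, norm_nonneg z]
  rw [h1]; linarith

lemma logf_cont {c : ℂ} (hc : ‖c‖ < 1) :
    Continuous fun θ : ℝ => Complex.log (1 - c * Complex.exp (θ * Complex.I)) := by
  rw [continuous_iff_continuousAt]
  intro θ
  have h1 : Continuous fun θ : ℝ => 1 - c * Complex.exp (θ * Complex.I) := by
    fun_prop
  refine (continuousAt_clog ?_).comp h1.continuousAt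
  exact slit_aux hc (by simp)

lemma mean_zero (c : ℂ) (hc : ‖c‖ < 1) :
    ∫ θ in (0:ℝ)..(2*π), Real.log ‖1 - c * Complex.exp (θ * Complex.I)‖ = 0 := by
  set f : ℂ → ℂ := fun z => Complex.log (1 - c * z) with hf
  have hdiff : ∀ z ∈ Metric.closedBall (0:ℂ) 1, DifferentiableAt ℂ f z := by
    intro z hz
    simp only [Metric.mem_closedBall, dist_zero_right] at hz
    exact (Complex.differentiableAt_log (slit_aux hc hz)).comp z
      ((differentiable_const _).sub ((differentiable_const _).mul differentiable_id)).differentiableAt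
  have key : (∮ z in C((0:ℂ), 1), (z - 0)⁻¹ • f z) = (2 * π * Complex.I : ℂ) • f 0 := by
    refine Complex.circleIntegral_sub_center_inv_smul_of_differentiable_on_off_countable one_pos
      Set.countable_empty ?_ ?_
    · exact fun z hz => (hdiff z hz).continuousAt.continuousWithinAt
    · exact fun z hz => hdiff z (Metric.ball_subset_closedBall hz.1)
  have hf0 : f 0 = 0 := by simp [hf]
  rw [hf0, smul_zero] at key
  rw [circleIntegral] at key
  have key2 : ∫ θ in (0:ℝ)..(2*π), Complex.I * f (Complex.exp (θ * Complex.I)) = 0 := by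
    rw [← key]
    refine intervalIntegral.integral_congr fun θ _ => ?_
    have h1 : circleMap 0 1 θ = Complex.exp (θ * Complex.I) := by
      simp [circleMap]
    have h2 : Complex.exp (θ * Complex.I) ≠ 0 := Complex.exp_ne_zero _
    rw [deriv_circleMap, h1, sub_zero, smul_eq_mul, smul_eq_mul]
    field_simp
  rw [intervalIntegral.integral_const_mul] at key2
  have key3 : ∫ θ in (0:ℝ)..(2*π), f (Complex.exp (θ * Complex.I)) = 0 := by
    rcases mul_eq_zero.1 key2 with h | h
    · exact absurd h Complex.I_ne_zero
    · exact h
  have hint : IntervalIntegrable (fun θ : ℝ => f (Complex.exp (θ * Complex.I))) volume 0 (2*π) :=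
    (logf_cont hc).intervalIntegrable _ _
  calc ∫ θ in (0:ℝ)..(2*π), Real.log ‖1 - c * Complex.exp (θ * Complex.I)‖
      = ∫ θ in (0:ℝ)..(2*π), Complex.reCLM (f (Complex.exp (θ * Complex.I))) := by
        refine intervalIntegral.integral_congr fun θ _ => ?_
        simp [hf, Complex.log_re]
    _ = Complex.reCLM (∫ θ in (0:ℝ)..(2*π), f (Complex.exp (θ * Complex.I))) :=
        by rw [ContinuousLinearMap.intervalIntegral_comp_comm Complex.reCLM hint]
    _ = 0 := by rw [key3]; simp
lemma exp_I_periodic (g : ℂ → ℝ) : Function.Periodic (fun θ : ℝ => g (Complex.exp (θ * Complex.I))) (2*π) := by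
  intro θ
  simp only
  congr 1
  push_cast
  rw [add_mul, Complex.exp_add, Complex.exp_two_pi_mul_I, mul_one]

lemma one_sub_norm_pos {c : ℂ} (hc : ‖c‖ < 1) (u : ℂ) (hu : ‖u‖ = 1) : 0 < ‖1 - c * u‖ := by
  have : ‖c * u‖ < 1 := by rw [norm_mul, hu, mul_one]; exact hc
  calc 0 < 1 - ‖c * u‖ := by linarith
    _ ≤ ‖1 - c * u‖ := by
        have := norm_sub_norm_le (1:ℂ) (c*u)
        simpa using this

lemma norm_exp_I (θ : ℝ) : ‖Complex.exp ((θ:ℂ) * Complex.I)‖ = 1 := by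
  rw [Complex.norm_exp]
  simp

lemma circle_avg (w : ℂ) (r s : ℝ) (hw : ‖w‖ = r) (hr : 0 < r) (hs : 0 ≤ s) (hne : s ≠ r) :
    ∫ θ in (-π)..π, Real.log ‖w - s * Complex.exp (θ * Complex.I)‖
      = 2 * π * Real.log (max r s) := by
  have hw0 : w ≠ 0 := by
    intro h; rw [h, norm_zero] at hw; exact absurd hw.symm (ne_of_gt hr)
  have hper : Function.Periodic (fun θ : ℝ => Real.log ‖w - s * Complex.exp (θ * Complex.I)‖) (2*π) :=
    exp_I_periodic (fun u => Real.log ‖w - s * u‖)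
  have hshift : ∫ θ in (-π)..π, Real.log ‖w - s * Complex.exp (θ * Complex.I)‖
      = ∫ θ in (0:ℝ)..(2*π), Real.log ‖w - s * Complex.exp (θ * Complex.I)‖ := by
    have h2 := hper.intervalIntegral_add_eq (-π) 0
    rw [zero_add, show -π + 2*π = π by ring] at h2
    exact h2
  rw [hshift]
  rcases lt_or_gt_of_ne hne with hlt | hgt
  · -- s < r
    set c : ℂ := (s:ℂ) / w with hc
    have hcn : ‖c‖ < 1 := by
      rw [hc, norm_div, hw, Complex.norm_real, Real.norm_eq_abs, abs_of_nonneg hs, div_lt_one hr]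
      exact hlt
    have hpt : ∀ θ : ℝ, Real.log ‖w - s * Complex.exp (θ * Complex.I)‖
        = Real.log r + Real.log ‖1 - c * Complex.exp (θ * Complex.I)‖ := by
      intro θ
      have hfac : w - s * Complex.exp (θ * Complex.I) = w * (1 - c * Complex.exp (θ * Complex.I)) := by
        have hws : w * ((s:ℂ) / w) = s := by
          rw [mul_div_assoc', mul_comm, mul_div_assoc, div_self hw0, mul_one]
        rw [hc, mul_sub, mul_one, ← mul_assoc, hws]
      rw [hfac, norm_mul, hw, Real.log_mul (ne_of_gt hr)
        (ne_of_gt (one_sub_norm_pos hcn _ (norm_exp_I θ)))]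
    simp_rw [hpt]
    rw [intervalIntegral.integral_add (intervalIntegrable_const)
      ((Continuous.log (by fun_prop)
        (fun θ => ne_of_gt (one_sub_norm_pos hcn _ (norm_exp_I θ)))).intervalIntegrable _ _),
      mean_zero c hcn, max_eq_left hlt.le]
    simp [intervalIntegral.integral_const]
  · -- r < s
    have hs0 : 0 < s := lt_trans hr hgt
    set c : ℂ := w / (s:ℂ) with hc
    have hcn : ‖c‖ < 1 := by
      rw [hc, norm_div, hw, Complex.norm_real, Real.norm_eq_abs, abs_of_nonneg hs, div_lt_one hs0]
      exact hgt
    have hpt : ∀ θ : ℝ, Real.log ‖w - s * Complex.exp (θ * Complex.I)‖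
        = Real.log s + Real.log ‖1 - c * Complex.exp (((-θ : ℝ):ℂ) * Complex.I)‖ := by
      intro θ
      have hsC : (s:ℂ) ≠ 0 := by exact_mod_cast ne_of_gt hs0
      have hfac : w - s * Complex.exp (θ * Complex.I)
          = (-(s:ℂ) * Complex.exp (θ * Complex.I)) * (1 - c * Complex.exp (((-θ : ℝ):ℂ) * Complex.I)) := by
        have he : Complex.exp (((-θ : ℝ):ℂ) * Complex.I) = (Complex.exp ((θ:ℂ) * Complex.I))⁻¹ := by
          rw [← Complex.exp_neg]
          push_cast
          ring_nf
        rw [he, hc]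
        have hexp : Complex.exp ((θ:ℂ) * Complex.I) ≠ 0 := Complex.exp_ne_zero _
        field_simp
        ring
      rw [hfac, norm_mul]
      have h1 : ‖-(s:ℂ) * Complex.exp ((θ:ℂ) * Complex.I)‖ = s := by
        rw [norm_mul, norm_neg, Complex.norm_real, norm_exp_I, Real.norm_eq_abs,
          abs_of_nonneg hs0.le, mul_one]
      rw [h1, Real.log_mul (ne_of_gt hs0)
        (ne_of_gt (one_sub_norm_pos hcn _ (norm_exp_I (-θ))))]
    simp_rw [hpt]
    have hcont : Continuous fun θ : ℝ => Real.log ‖1 - c * Complex.exp (((-θ:ℝ):ℂ) * Complex.I)‖ :=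
      Continuous.log (by fun_prop) (fun θ => ne_of_gt (one_sub_norm_pos hcn _ (norm_exp_I (-θ))))
    have hsub : ∫ θ in (0:ℝ)..(2*π), Real.log ‖1 - c * Complex.exp (((-θ:ℝ):ℂ) * Complex.I)‖ = 0 := by
      rw [intervalIntegral.integral_comp_neg
        (fun t : ℝ => Real.log ‖1 - c * Complex.exp ((t:ℂ) * Complex.I)‖), neg_zero]
      have hper2 := (exp_I_periodic (fun u => Real.log ‖1 - c * u‖)).intervalIntegral_add_eq
        (-(2*π)) 0
      rw [zero_add, show -(2*π) + 2*π = 0 by ring] at hper2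
      rw [hper2]
      exact mean_zero c hcn
    rw [intervalIntegral.integral_add (intervalIntegrable_const) (hcont.intervalIntegrable _ _),
      hsub, max_eq_right hgt.le]
    simp [intervalIntegral.integral_const]
lemma norm_pos_of_ne (w : ℂ) {r s : ℝ} (hw : ‖w‖ = r) (hr : 0 < r) (hs : 0 ≤ s) (hne : s ≠ r)
    (θ : ℝ) : 0 < ‖w - s * Complex.exp ((θ:ℂ) * Complex.I)‖ := by
  rw [norm_pos_iff, sub_ne_zero]
  intro h
  apply hne
  rw [← hw, h, norm_mul, norm_exp_I, mul_one, Complex.norm_real, Real.norm_eq_abs,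
    abs_of_nonneg hs]

lemma theta_cont (w : ℂ) {r s : ℝ} (hw : ‖w‖ = r) (hr : 0 < r) (hs : 0 ≤ s) (hne : s ≠ r) :
    Continuous fun θ : ℝ => Real.log ‖w - s * Complex.exp ((θ:ℂ) * Complex.I)‖ :=
  Continuous.log (by fun_prop) fun θ => ne_of_gt (norm_pos_of_ne w hw hr hs hne θ)

lemma abs_log_le {M x : ℝ} (hx : 0 < x) (hxM : x ≤ M) :
    |Real.log x| ≤ (Real.log M - Real.log x) + 2 * |Real.log M| := by
  have hM : 0 < M := lt_of_lt_of_le hx hxM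
  have h1 : Real.log x ≤ Real.log M := Real.log_le_log hx hxM
  rcases abs_cases (Real.log x) with ⟨h, _⟩ | ⟨h, _⟩ <;> rcases abs_cases (Real.log M) with ⟨h', _⟩ | ⟨h', _⟩ <;>
    rw [h] <;> linarith

lemma theta_abs_bound (w : ℂ) {r L s : ℝ} (hw : ‖w‖ = r) (hr : 0 < r) (hrL : r ≤ L)
    (hs : 0 < s) (hsL : s ≤ L) (hne : s ≠ r) :
    ∫ θ in Ioo (-π) π, |Real.log ‖w - s * Complex.exp ((θ:ℂ) * Complex.I)‖|
      ≤ 2*π*(Real.log (2*L) - Real.log r) + 4*π*|Real.log (2*L)| := by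
  have hL : 0 < L := lt_of_lt_of_le hr hrL
  have hxM : ∀ θ : ℝ, ‖w - s * Complex.exp ((θ:ℂ) * Complex.I)‖ ≤ 2*L := by
    intro θ
    calc ‖w - s * Complex.exp ((θ:ℂ) * Complex.I)‖
        ≤ ‖w‖ + ‖s * Complex.exp ((θ:ℂ) * Complex.I)‖ := norm_sub_le _ _
      _ ≤ 2*L := by
          rw [hw, norm_mul, norm_exp_I, mul_one, Complex.norm_real, Real.norm_eq_abs,
            abs_of_nonneg hs.le]
          linarith
  have hcont := theta_cont w hw hr hs.le hne
  have hint1 : IntegrableOn (fun θ : ℝ => |Real.log ‖w - s * Complex.exp ((θ:ℂ) * Complex.I)‖|)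
      (Ioo (-π) π) := (hcont.abs.integrableOn_Ioc).mono_set Ioo_subset_Ioc_self
  have hint2 : IntegrableOn (fun θ : ℝ =>
      (Real.log (2*L) - Real.log ‖w - s * Complex.exp ((θ:ℂ) * Complex.I)‖) + 2*|Real.log (2*L)|)
      (Ioo (-π) π) := (((continuous_const.sub hcont).add continuous_const).integrableOn_Ioc).mono_set Ioo_subset_Ioc_self
  have hmono := setIntegral_mono_on hint1 hint2 measurableSet_Ioo (fun θ _ =>
    abs_log_le (norm_pos_of_ne w hw hr hs.le hne θ) (hxM θ))
  refine le_trans hmono ?_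
  have hIoo : ∫ θ in Ioo (-π) π, Real.log ‖w - s * Complex.exp ((θ:ℂ) * Complex.I)‖
      = 2 * π * Real.log (max r s) := by
    rw [← integral_Ioc_eq_integral_Ioo, ← intervalIntegral.integral_of_le (by linarith [pi_pos])]
    exact circle_avg w r s hw hr hs.le hne
  have hconst : IntegrableOn (fun _ : ℝ => Real.log (2*L) + 2*|Real.log (2*L)|) (Ioo (-π) π) :=
    integrableOn_const measure_Ioo_lt_top.ne
  have hgi : IntegrableOn (fun θ : ℝ => Real.log ‖w - s * Complex.exp ((θ:ℂ) * Complex.I)‖)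
      (Ioo (-π) π) := (hcont.integrableOn_Ioc).mono_set Ioo_subset_Ioc_self
  have e1 : ∫ θ in Ioo (-π) π,
        ((Real.log (2*L) - Real.log ‖w - s * Complex.exp ((θ:ℂ) * Complex.I)‖) + 2*|Real.log (2*L)|)
      = ∫ θ in Ioo (-π) π,
        ((Real.log (2*L) + 2*|Real.log (2*L)|) - Real.log ‖w - s * Complex.exp ((θ:ℂ) * Complex.I)‖) :=
    integral_congr_ae (Filter.Eventually.of_forall fun θ => by ring)
  rw [e1, integral_sub hconst hgi, hIoo, setIntegral_const]
  have hvol : (volume (Ioo (-π) π)).toReal = 2*π := by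
    rw [Real.volume_Ioo, ENNReal.toReal_ofReal (by linarith [pi_pos])]
    ring
  rw [measureReal_def, hvol]
  have hmax : Real.log r ≤ Real.log (max r s) := Real.log_le_log hr (le_max_left _ _)
  rw [smul_eq_mul]
  nlinarith [pi_pos]
lemma ae_ne_r (r : ℝ) : ∀ᵐ s : ℝ, s ≠ r := by
  rw [ae_iff]
  convert Real.volume_singleton (a := r) using 2
  ext x; simp

lemma prod_meas (w : ℂ) :
    Measurable fun p : ℝ × ℝ => p.1 * Real.log ‖w - p.1 * Complex.exp ((p.2:ℂ) * Complex.I)‖ := by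
  apply Measurable.mul measurable_fst
  apply Real.measurable_log.comp
  fun_prop

lemma key_int (w : ℂ) {r L : ℝ} (hw : ‖w‖ = r) (hr : 0 < r) (hrL : r ≤ L) :
    IntegrableOn (fun p : ℝ × ℝ => p.1 * Real.log ‖w - p.1 * Complex.exp ((p.2:ℂ) * Complex.I)‖)
      (Ioo 0 L ×ˢ Ioo (-π) π) := by
  set C₀ : ℝ := 2*π*(Real.log (2*L) - Real.log r) + 4*π*|Real.log (2*L)| with hC₀
  have hL : 0 < L := lt_of_lt_of_le hr hrL
  refine ⟨((prod_meas w).aestronglyMeasurable), ?_⟩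
  rw [hasFiniteIntegral_iff_norm]
  calc ∫⁻ p : ℝ × ℝ in Ioo 0 L ×ˢ Ioo (-π) π,
        ENNReal.ofReal ‖p.1 * Real.log ‖w - p.1 * Complex.exp ((p.2:ℂ) * Complex.I)‖‖
      = ∫⁻ s in Ioo 0 L, ∫⁻ θ in Ioo (-π) π,
          ENNReal.ofReal ‖s * Real.log ‖w - s * Complex.exp ((θ:ℂ) * Complex.I)‖‖ := by
        rw [Measure.volume_eq_prod, ← Measure.prod_restrict]
        exact lintegral_prod _ ((ENNReal.measurable_ofReal.comp
          (prod_meas w).norm).aemeasurable)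
    _ ≤ ∫⁻ _ in Ioo 0 L, ENNReal.ofReal (L * C₀) := by
        refine lintegral_mono_ae ?_
        have h1 : ∀ᵐ s : ℝ ∂(volume.restrict (Ioo 0 L)), s ≠ r :=
          ae_restrict_of_ae (ae_ne_r r)
        have h2 : ∀ᵐ s : ℝ ∂(volume.restrict (Ioo 0 L)), s ∈ Ioo 0 L :=
          ae_restrict_mem measurableSet_Ioo
        filter_upwards [h1, h2] with s hsne hsIoo
        have hs0 : 0 < s := hsIoo.1
        have hcont := theta_cont w hw hr hs0.le hsne
        have habs : IntegrableOn
            (fun θ : ℝ => |s * Real.log ‖w - s * Complex.exp ((θ:ℂ) * Complex.I)‖|)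
            (Ioo (-π) π) :=
          ((continuous_const.mul hcont).abs.integrableOn_Ioc).mono_set Ioo_subset_Ioc_self
        have heq : ∫⁻ θ in Ioo (-π) π,
            ENNReal.ofReal ‖s * Real.log ‖w - s * Complex.exp ((θ:ℂ) * Complex.I)‖‖
            = ENNReal.ofReal (∫ θ in Ioo (-π) π,
              |s * Real.log ‖w - s * Complex.exp ((θ:ℂ) * Complex.I)‖|) := by
          rw [ofReal_integral_eq_lintegral_ofReal habs
            (Filter.Eventually.of_forall fun θ => abs_nonneg _)]
          simp_rw [Real.norm_eq_abs]
        rw [heq]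
        apply ENNReal.ofReal_le_ofReal
        have : ∫ θ in Ioo (-π) π, |s * Real.log ‖w - s * Complex.exp ((θ:ℂ) * Complex.I)‖|
            = s * ∫ θ in Ioo (-π) π, |Real.log ‖w - s * Complex.exp ((θ:ℂ) * Complex.I)‖| := by
          rw [← MeasureTheory.integral_const_mul]
          refine integral_congr_ae (Filter.Eventually.of_forall fun θ => ?_)
          simp only []
          rw [abs_mul, abs_of_nonneg hs0.le]
        rw [this]
        have hb := theta_abs_bound w hw hr hrL hs0 hsIoo.2.le hsne
        have hnn : 0 ≤ ∫ θ in Ioo (-π) π, |Real.log ‖w - s * Complex.exp ((θ:ℂ) * Complex.I)‖| :=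
          integral_nonneg fun θ => abs_nonneg _
        have hsL' : s ≤ L := hsIoo.2.le
        nlinarith
    _ < ⊤ := by
        rw [lintegral_const, Measure.restrict_apply MeasurableSet.univ, univ_inter,
          Real.volume_Ioo]
        exact ENNReal.mul_lt_top ENNReal.ofReal_lt_top ENNReal.ofReal_lt_top
lemma polar_symm_exp (p : ℝ × ℝ) :
    Complex.polarCoord.symm p = (p.1 : ℂ) * Complex.exp ((p.2:ℂ) * Complex.I) := by
  rw [Complex.polarCoord_symm_apply, Complex.exp_mul_I]
  push_cast
  ring

lemma outer_integral {r L : ℝ} (hr : 0 < r) (hrL : r ≤ L) :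
    ∫ s in (0:ℝ)..L, s * (2 * π * Real.log (max r s))
      = π * L^2 * Real.log L + (π/2) * (r^2 - L^2) := by
  have hL : 0 < L := lt_of_lt_of_le hr hrL
  have hsplit : ∫ s in (0:ℝ)..L, s * (2 * π * Real.log (max r s))
      = (∫ s in (0:ℝ)..r, s * (2 * π * Real.log (max r s)))
        + ∫ s in r..L, s * (2 * π * Real.log (max r s)) := by
    rw [intervalIntegral.integral_add_adjacent_intervals] <;>
    · apply ContinuousOn.intervalIntegrable
      apply ContinuousOn.mul continuousOn_id
      apply ContinuousOn.mul continuousOn_const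
      apply ContinuousOn.log
      · exact (continuousOn_const.sup continuousOn_id)
      · intro x hx
        rw [uIcc_of_le (by linarith)] at hx
        exact ne_of_gt (lt_max_of_lt_left hr)
  rw [hsplit]
  have h1 : ∫ s in (0:ℝ)..r, s * (2 * π * Real.log (max r s)) = π * r^2 * Real.log r := by
    have : ∫ s in (0:ℝ)..r, s * (2 * π * Real.log (max r s))
        = ∫ s in (0:ℝ)..r, (2 * π * Real.log r) * s := by
      refine intervalIntegral.integral_congr fun s hs => ?_
      rw [uIcc_of_le hr.le] at hs
      rw [max_eq_left hs.2]
      ring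
    rw [this, intervalIntegral.integral_const_mul, integral_id]
    ring
  have h2 : ∫ s in r..L, s * (2 * π * Real.log (max r s))
      = 2 * π * ((L^2/2 * Real.log L - L^2/4) - (r^2/2 * Real.log r - r^2/4)) := by
    have e : ∫ s in r..L, s * (2 * π * Real.log (max r s))
        = ∫ s in r..L, (2*π) * (s * Real.log s) := by
      refine intervalIntegral.integral_congr fun s hs => ?_
      rw [uIcc_of_le hrL] at hs
      rw [max_eq_right hs.1]
      ring
    rw [e, intervalIntegral.integral_const_mul]
    congr 1
    have hderiv : ∀ x ∈ uIcc r L, HasDerivAt (fun s : ℝ => s^2/2 * Real.log s - s^2/4)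
        (x * Real.log x) x := by
      intro x hx
      rw [uIcc_of_le hrL] at hx
      have hx0 : 0 < x := lt_of_lt_of_le hr hx.1
      have hd : HasDerivAt (fun s : ℝ => s^2/2 * Real.log s - s^2/4)
          ((2*x/2) * Real.log x + x^2/2 * x⁻¹ - 2*x/4) x := by
        exact (((hasDerivAt_pow 2 x).div_const 2).mul (Real.hasDerivAt_log (ne_of_gt hx0))).sub
          ((hasDerivAt_pow 2 x).div_const 4) |>.congr_deriv (by push_cast; ring)
      convert hd using 1
      field_simp
      ring
    rw [intervalIntegral.integral_eq_sub_of_hasDerivAt hderiv ?_]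
    apply ContinuousOn.intervalIntegrable
    apply ContinuousOn.mul continuousOn_id
    apply Real.continuousOn_log.mono
    intro x hx
    rw [uIcc_of_le hrL] at hx
    exact ne_of_gt (lt_of_lt_of_le hr hx.1)
  rw [h1, h2]
  ring

lemma newton (w : ℂ) {r L : ℝ} (hw : ‖w‖ = r) (hr : 0 < r) (hrL : r ≤ L) :
    ∫ v in Metric.ball (0:ℂ) L, Real.log ‖w - v‖
      = π * L^2 * Real.log L + (π/2) * (r^2 - L^2) := by
  have hL : 0 < L := lt_of_lt_of_le hr hrL
  set f : ℂ → ℝ := (Metric.ball (0:ℂ) L).indicator (fun v => Real.log ‖w - v‖) with hf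
  have step1 : ∫ v in Metric.ball (0:ℂ) L, Real.log ‖w - v‖ = ∫ v, f v :=
    (MeasureTheory.integral_indicator measurableSet_ball).symm
  have step2 : ∫ v, f v = ∫ p in Complex.polarCoord.target, p.1 • f (Complex.polarCoord.symm p) :=
    (Complex.integral_comp_polarCoord_symm f).symm
  have step3 : ∫ p in Complex.polarCoord.target, p.1 • f (Complex.polarCoord.symm p)
      = ∫ p in (Ioo 0 L ×ˢ Ioo (-π) π),
          p.1 * Real.log ‖w - p.1 * Complex.exp ((p.2:ℂ) * Complex.I)‖ := by
    rw [Complex.polarCoord_target]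
    have he : ∀ p ∈ Ioi (0:ℝ) ×ˢ Ioo (-π) π, p.1 • f (Complex.polarCoord.symm p)
        = (Ioo 0 L ×ˢ Ioo (-π) π).indicator
            (fun p : ℝ × ℝ => p.1 * Real.log ‖w - p.1 * Complex.exp ((p.2:ℂ) * Complex.I)‖) p := by
      rintro ⟨s, θ⟩ ⟨hs, hθ⟩
      simp only [smul_eq_mul, hf]
      rw [polar_symm_exp]
      by_cases hsL : s < L
      · rw [indicator_of_mem, indicator_of_mem]
        · exact mem_prod.2 ⟨⟨hs, hsL⟩, hθ⟩
        · rw [Metric.mem_ball, dist_zero_right, norm_mul, Complex.norm_real, Real.norm_eq_abs,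
            abs_of_nonneg (le_of_lt hs)]
          have : ‖Complex.exp ((θ:ℂ) * Complex.I)‖ = 1 := by
            rw [Complex.norm_exp]; simp
          rw [this, mul_one]
          exact hsL
      · rw [indicator_of_notMem, indicator_of_notMem, mul_zero]
        · intro hmem
          exact hsL (hmem.1.2)
        · rw [Metric.mem_ball, dist_zero_right, norm_mul, Complex.norm_real, Real.norm_eq_abs,
            abs_of_nonneg (le_of_lt hs)]
          have : ‖Complex.exp ((θ:ℂ) * Complex.I)‖ = 1 := by
            rw [Complex.norm_exp]; simp
          rw [this, mul_one]
          exact fun h => hsL h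
      
    rw [setIntegral_congr_fun (measurableSet_Ioi.prod measurableSet_Ioo) he,
      setIntegral_indicator ((measurableSet_Ioo.prod measurableSet_Ioo)),
      inter_eq_self_of_subset_right]
    exact prod_mono (Ioo_subset_Ioi_self) (subset_refl _)
  have step4 : ∫ p in (Ioo 0 L ×ˢ Ioo (-π) π),
        p.1 * Real.log ‖w - p.1 * Complex.exp ((p.2:ℂ) * Complex.I)‖
      = ∫ s in Ioo (0:ℝ) L, ∫ θ in Ioo (-π) π,
          s * Real.log ‖w - s * Complex.exp ((θ:ℂ) * Complex.I)‖ := by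
    rw [Measure.volume_eq_prod]
    exact setIntegral_prod _ (by rw [← Measure.volume_eq_prod]; exact key_int w hw hr hrL)
  have step5 : ∫ s in Ioo (0:ℝ) L, ∫ θ in Ioo (-π) π,
        s * Real.log ‖w - s * Complex.exp ((θ:ℂ) * Complex.I)‖
      = ∫ s in Ioo (0:ℝ) L, s * (2 * π * Real.log (max r s)) := by
    refine setIntegral_congr_ae measurableSet_Ioo ?_
    filter_upwards [ae_ne_r r] with s hsne hsIoo
    rw [MeasureTheory.integral_const_mul, ← integral_Ioc_eq_integral_Ioo,
      ← intervalIntegral.integral_of_le (by linarith [pi_pos]),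
      circle_avg w r s hw hr hsIoo.1.le hsne]
  have step6 : ∫ s in Ioo (0:ℝ) L, s * (2 * π * Real.log (max r s))
      = π * L^2 * Real.log L + (π/2) * (r^2 - L^2) := by
    rw [← integral_Ioc_eq_integral_Ioo, ← intervalIntegral.integral_of_le hL.le]
    exact outer_integral hr hrL
  rw [step1, step2, step3, step4, step5, step6]

lemma translate_ball (z z₀ : ℂ) (L : ℝ) :
    ∫ y in Metric.ball z₀ L, Real.log ‖z - y‖
      = ∫ v in Metric.ball (0:ℂ) L, Real.log ‖(z - z₀) - v‖ := by
  rw [← MeasureTheory.integral_indicator measurableSet_ball,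
    ← MeasureTheory.integral_indicator measurableSet_ball,
    ← integral_add_left_eq_self
      (fun y => (Metric.ball z₀ L).indicator (fun y => Real.log ‖z - y‖) y) z₀]
  congr 1
  funext v
  have hmem : z₀ + v ∈ Metric.ball z₀ L ↔ v ∈ Metric.ball (0:ℂ) L := by
    simp [Metric.mem_ball, dist_eq_norm]
  by_cases h : v ∈ Metric.ball (0:ℂ) L
  · rw [indicator_of_mem (hmem.2 h), indicator_of_mem h]
    congr 1
    ring_nf
  · rw [indicator_of_notMem (fun hh => h (hmem.1 hh)), indicator_of_notMem h]

theorem stmt19 (z₀ : ℂ) (L : ℝ) (hL : 0 < L) (a : ℝ) (ha : a = 2 * L ^ 2)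
    (G : ℂ → ℝ)
    (hG : ∀ z : ℂ, G z = a * (-Real.log ‖z - z₀‖) +
      (2 / Real.pi) * ∫ y in Metric.ball z₀ L, Real.log ‖z - y‖) :
    ∀ (z : ℂ) (r : ℝ), dist z z₀ = r → 0 < r → r ≤ L →
      G z = 2 * L ^ 2 * Real.log L - 2 * L ^ 2 * Real.log r + r ^ 2 - L ^ 2 := by
  intro z r hdist hr hrL
  have hw : ‖z - z₀‖ = r := by rw [← hdist, dist_eq_norm]
  rw [hG z, translate_ball, newton (z - z₀) hw hr hrL, hw, ha]
  have hπ : (π : ℝ) ≠ 0 := Real.pi_ne_zero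
  field_simp
  ring
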